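/- arXiv:1201.3194 — 2 statements merged into one kernel-verified Lean document; each statement's English description precedes it below -/
import Mathlib

section
/- Let a₁, …, aₙ be pairwise distinct letters of an alphabet Σ, let B = {a₁^{k₁} ⋯ aₙ^{kₙ} : k₁, …, kₙ ∈ ℕ}, let d ≥ 1, and let L be a language over Σ × {1, …, d} such that for every w ∈ L and every i ∈ {1, …, d}, the index-i projection π_i(w) belongs to B. Then for all words u₁, …, u_d ∈ B, the indexed shuffle (u₁ ⋈ 1) ⧢ ⋯ ⧢ (u_d ⋈ d) intersects L non-trivially if and only if there exists w ∈ L such that for every letter a ∈ {a₁,…,aₙ} and every i ∈ {1,…,d}, the number of occurrences of the letter (a, i) in w equals the number of occurrences of a in u_i. -/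
/-- `IsShuffle u v w` holds iff `w` is an interleaving of `u` and `v`,
i.e. `w ∈ u ⧢ v`. -/
inductive IsShuffle {α : Type*} : List α → List α → List α → Prop
  | nil : IsShuffle [] [] []
  | left {u v w : List α} (a : α) : IsShuffle u v w → IsShuffle (a :: u) v (a :: w)
  | right {u v w : List α} (a : α) : IsShuffle u v w → IsShuffle u (a :: v) (a :: w)

/-- Shuffle of two languages. -/
def langShuffle {α : Type*} (L₁ L₂ : Set (List α)) : Set (List α) :=
  {w | ∃ u ∈ L₁, ∃ v ∈ L₂, IsShuffle u v w}

/-- Iterated shuffle `u₁ ⧢ u₂ ⧢ ⋯ ⧢ u_d` of a list of words. -/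
def iterShuffle {α : Type*} : List (List α) → Set (List α)
  | [] => {[]}
  | u :: us => langShuffle {u} (iterShuffle us)

/-- The index-`i` projection of a word over `α × Fin d`: keep, in order, the
first components of the letters whose second component is `i`. -/
def proj {α : Type*} {d : ℕ} (w : List (α × Fin d)) (i : Fin d) : List α :=
  (w.filter fun p => p.2 = i).map Prod.fst

/-- The letter-bounded language `a₁^* a₂^* ⋯ aₙ^*` determined by the letters
`a 0, …, a (n-1)`. -/
def letterBounded {α : Type*} {n : ℕ} (a : Fin n → α) : Set (List α) :=
  {w | ∃ k : Fin n → ℕ, w = (List.ofFn fun j => List.replicate (k j) (a j)).flatten}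

section Aux

variable {α : Type*}

lemma isShuffle_nil_left {v w : List α} (h : IsShuffle [] v w) : w = v := by
  generalize hu : ([] : List α) = e at h
  induction h with
  | nil => rfl
  | left a _ ih => simp at hu
  | right a h ih => simp [ih hu]

lemma isShuffle_nil_right {u w : List α} (h : IsShuffle u [] w) : w = u := by
  generalize hv : ([] : List α) = e at h
  induction h with
  | nil => rfl
  | left a h ih => simp [ih hv]
  | right a _ ih => simp at hv

lemma IsShuffle.filter' (p : α → Bool) {u v w : List α} (h : IsShuffle u v w) :
    IsShuffle (u.filter p) (v.filter p) (w.filter p) := by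
  induction h with
  | nil => exact .nil
  | left a _ ih =>
    by_cases hp : p a
    · simpa [List.filter_cons, hp] using IsShuffle.left a ih
    · simpa [List.filter_cons, hp] using ih
  | right a _ ih =>
    by_cases hp : p a
    · simpa [List.filter_cons, hp] using IsShuffle.right a ih
    · simpa [List.filter_cons, hp] using ih

lemma IsShuffle.mem_or {u v w : List α} (h : IsShuffle u v w) :
    ∀ x ∈ w, x ∈ u ∨ x ∈ v := by
  induction h with
  | nil => simp
  | left a _ ih =>
    intro x hx
    rcases List.mem_cons.1 hx with rfl | hx
    · simp
    · rcases ih x hx with h | h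
      · exact Or.inl (List.mem_cons_of_mem _ h)
      · exact Or.inr h
  | right a _ ih =>
    intro x hx
    rcases List.mem_cons.1 hx with rfl | hx
    · simp
    · rcases ih x hx with h | h
      · exact Or.inl h
      · exact Or.inr (List.mem_cons_of_mem _ h)

lemma isShuffle_filter_self (p : α → Bool) (w : List α) :
    IsShuffle (w.filter p) (w.filter fun x => !p x) w := by
  induction w with
  | nil => exact .nil
  | cons a w ih =>
    by_cases hp : p a
    · simpa [List.filter_cons, hp] using IsShuffle.left a ih
    · simpa [List.filter_cons, hp] using IsShuffle.right a ih

lemma eq_tagged {d : ℕ} {i : Fin d} :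
    ∀ {x : List (α × Fin d)}, (∀ p ∈ x, p.2 = i) →
      x = (x.map Prod.fst).map fun y => (y, i) := by
  intro x
  induction x with
  | nil => simp
  | cons p x ih =>
    intro h
    have hp : p.2 = i := h p (by simp)
    have := ih fun q hq => h q (List.mem_cons_of_mem _ hq)
    simp only [List.map_cons]
    rw [← this, ← hp]

lemma count_proj [DecidableEq α] {d : ℕ} (w : List (α × Fin d)) (i : Fin d) (x : α) :
    (proj w i).count x = w.count (x, i) := by
  induction w with
  | nil => rfl
  | cons p w ih =>
    rcases p with ⟨y, j⟩
    by_cases hj : j = i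
    · subst hj
      by_cases hy : y = x
      · subst hy; simp [proj, List.filter_cons, List.count_cons, ← ih, proj]
      · simp [proj, List.filter_cons, List.count_cons, hy, ← ih, proj, Prod.ext_iff]
    · simp [proj, List.filter_cons, List.count_cons, hj, ← ih, proj, Prod.ext_iff]

lemma count_letterBounded [DecidableEq α] {n : ℕ} (a : Fin n → α)
    (ha : Function.Injective a) (k : Fin n → ℕ) (j : Fin n) :
    ((List.ofFn fun j => List.replicate (k j) (a j)).flatten).count (a j) = k j := by
  rw [List.count_flatten, List.map_ofFn, List.sum_ofFn]
  have : ∀ j' : Fin n, (List.replicate (k j') (a j')).count (a j)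
      = if j' = j then k j else 0 := by
    intro j'
    rw [List.count_replicate]
    by_cases h : j' = j
    · subst h; simp
    · simp only [beq_iff_eq]
      rw [if_neg fun hc => h (ha hc), if_neg h]
  simp only [Function.comp, this]
  simp

lemma letterBounded_ext [DecidableEq α] {n : ℕ} {a : Fin n → α}
    (ha : Function.Injective a) {v v' : List α}
    (hv : v ∈ letterBounded a) (hv' : v' ∈ letterBounded a)
    (h : ∀ j, v.count (a j) = v'.count (a j)) : v = v' := by
  obtain ⟨k, rfl⟩ := hv
  obtain ⟨k', rfl⟩ := hv'
  have : k = k' := by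
    funext j
    have := h j
    rwa [count_letterBounded a ha, count_letterBounded a ha] at this
  rw [this]

lemma mem_iterShuffle_iff {d : ℕ} (u : Fin d → List α) :
    ∀ (l : List (Fin d)), l.Nodup → ∀ (w : List (α × Fin d)),
    (w ∈ iterShuffle (l.map fun i => (u i).map fun x => (x, i)) ↔
      (∀ i ∈ l, proj w i = u i) ∧ ∀ p ∈ w, p.2 ∈ l) := by
  intro l
  induction l with
  | nil =>
    intro _ w
    simp only [List.map_nil, iterShuffle, Set.mem_singleton_iff, List.not_mem_nil]
    constructor
    · rintro rfl; simp
    · rintro ⟨-, h⟩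
      cases w with
      | nil => rfl
      | cons p w => exact absurd (h p (by simp)) (by simp)
  | cons i rest ih =>
    intro hnd w
    have hi : i ∉ rest := (List.nodup_cons.1 hnd).1
    have hrest : rest.Nodup := (List.nodup_cons.1 hnd).2
    constructor
    · rintro ⟨x, hx, v, hv, hsh⟩
      rw [Set.mem_singleton_iff] at hx
      subst hx
      obtain ⟨hproj, htags⟩ := (ih hrest v).1 hv
      have htagsw : ∀ p ∈ w, p.2 ∈ i :: rest := by
        intro p hp
        rcases hsh.mem_or p hp with h | h
        · simp only [List.mem_map] at h
          obtain ⟨y, -, rfl⟩ := h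
          simp
        · exact List.mem_cons_of_mem _ (htags p h)
      refine ⟨?_, htagsw⟩
      intro i' hi'
      rcases List.mem_cons.1 hi' with rfl | hi'
      · -- i' = i
        have hf := hsh.filter' (fun p => decide (p.2 = i'))
        have hx : ((u i').map fun x => (x, i')).filter (fun p => decide (p.2 = i'))
            = (u i').map fun x => (x, i') := by
          apply List.filter_eq_self.2
          intro p hp
          simp only [List.mem_map] at hp
          obtain ⟨y, -, rfl⟩ := hp
          simp
        have hvf : v.filter (fun p => decide (p.2 = i')) = [] := by
          apply List.filter_eq_nil_iff.2
          intro p hp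
          simp only [decide_eq_true_eq]
          intro hc
          have := htags p hp
          rw [hc] at this
          exact hi this
        rw [hx, hvf] at hf
        have := isShuffle_nil_right hf
        unfold proj
        rw [this]
        simp [Function.comp_def]
      · -- i' ∈ rest, so i' ≠ i
        have hne : i ≠ i' := fun hc => hi (hc ▸ hi')
        have hf := hsh.filter' (fun p => decide (p.2 = i'))
        have hx : ((u i).map fun x => (x, i)).filter (fun p => decide (p.2 = i')) = [] := by
          apply List.filter_eq_nil_iff.2
          intro p hp
          simp only [List.mem_map] at hp
          obtain ⟨y, -, rfl⟩ := hp
          simpa using hne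
        rw [hx] at hf
        have := isShuffle_nil_left hf
        unfold proj
        rw [this]
        exact hproj i' hi'
    · rintro ⟨hproj, htags⟩
      refine ⟨(u i).map fun x => (x, i), rfl, w.filter fun p => !decide (p.2 = i), ?_, ?_⟩
      · apply (ih hrest _).2
        constructor
        · intro i' hi'
          have hne : i' ≠ i := fun hc => hi (hc ▸ hi')
          unfold proj
          rw [List.filter_filter]
          have : ∀ p ∈ w, ((decide (p.2 = i') && !decide (p.2 = i)) : Bool)
              = decide (p.2 = i') := by
            intro p hp
            by_cases h : p.2 = i'
            · simp [h, hne]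
            · simp [h]
          rw [List.filter_congr this]
          exact hproj i' (List.mem_cons_of_mem _ hi')
        · intro p hp
          have hpw := List.mem_of_mem_filter hp
          have := htags p hpw
          rcases List.mem_cons.1 this with h | h
          · exfalso
            have := List.of_mem_filter hp
            simp [h] at this
          · exact h
      · have hx : w.filter (fun p => decide (p.2 = i)) = (u i).map fun x => (x, i) := by
          have hall : ∀ p ∈ w.filter (fun p => decide (p.2 = i)), p.2 = i := by
            intro p hp
            simpa using List.of_mem_filter hp
          rw [eq_tagged hall]
          have : (w.filter (fun p => decide (p.2 = i))).map Prod.fst = u i :=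
            hproj i (by simp)
          rw [this]
        rw [← hx]
        exact isShuffle_filter_self _ w

end Aux

/-- Let `a₁, …, aₙ` be pairwise distinct letters, `B = a₁^* ⋯ aₙ^*`, and let
`L` be a language over `α × Fin d` all of whose words project into `B` on every
index.  Then for words `u₁, …, u_d ∈ B`, the indexed shuffle
`(u₁ ⋈ 1) ⧢ ⋯ ⧢ (u_d ⋈ d)` meets `L` iff some `w ∈ L` has, for every letter
`aⱼ` and index `i`, as many occurrences of `(aⱼ, i)` as `uᵢ` has of `aⱼ`. -/
theorem iterShuffle_inter_iff_counts {α : Type*} [DecidableEq α] {n d : ℕ}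
    (hn : 1 ≤ n) (hd : 1 ≤ d) (a : Fin n → α) (ha : Function.Injective a)
    (L : Set (List (α × Fin d)))
    (hL : ∀ w ∈ L, ∀ i : Fin d, proj w i ∈ letterBounded a)
    (u : Fin d → List α) (hu : ∀ i, u i ∈ letterBounded a) :
    (∃ w ∈ iterShuffle ((List.finRange d).map fun i =>
        (u i).map fun x => (x, i)), w ∈ L) ↔
    (∃ w ∈ L, ∀ (j : Fin n) (i : Fin d),
        w.count (a j, i) = (u i).count (a j)) := by
  constructor
  · rintro ⟨w, hw, hwL⟩
    refine ⟨w, hwL, fun j i => ?_⟩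
    obtain ⟨hproj, -⟩ := (mem_iterShuffle_iff u (List.finRange d)
      (List.nodup_finRange d) w).1 hw
    rw [← count_proj, hproj i (List.mem_finRange i)]
  · rintro ⟨w, hwL, hcnt⟩
    refine ⟨w, ?_, hwL⟩
    apply (mem_iterShuffle_iff u (List.finRange d) (List.nodup_finRange d) w).2
    refine ⟨fun i _ => ?_, fun p _ => List.mem_finRange _⟩
    apply letterBounded_ext ha (hL w hwL i) (hu i)
    intro j
    rw [count_proj, hcnt j i]
end

section
/- Let v₀ and v₁ be words over an alphabet Σ with v₀·v₁ ≠ v₁·v₀. Then the map h from binary strings to words over Σ defined by h(b₁ b₂ ⋯ bₘ) = v_{b₁} · v_{b₂} ⋯ v_{bₘ} (mapping the empty string to the empty word) is injective: for all lists s, t of bits, if the concatenation of the words v_{s_i} equals the concatenation of the words v_{t_i}, then s = t. -/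
namespace NoncommEnc

variable {α : Type*}

/-- Evaluation of a bit string as a product of the two words `x` (for `false`)
and `y` (for `true`). -/
def g (x y : List α) (s : List Bool) : List α :=
  (s.map fun b => bif b then y else x).flatten

@[simp] lemma g_nil (x y : List α) : g x y [] = [] := rfl

@[simp] lemma g_cons (x y : List α) (b : Bool) (s : List Bool) :
    g x y (b :: s) = (bif b then y else x) ++ g x y s := by
  simp [g]

/-- Translation: products over `{x, x++z}` are products over `{z, x}`. -/
lemma T1 (x z : List α) : ∀ s : List Bool,
    g z x (s.flatMap fun b => bif b then [true, false] else [true]) = g x (x ++ z) s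
  | [] => rfl
  | b :: s => by
    cases b <;> simp [T1 x z s]

/-- Translation: products over `{y++z, y}` are products over `{z, y}`. -/
lemma T2 (y z : List α) : ∀ s : List Bool,
    g z y (s.flatMap fun b => bif b then [true] else [true, false]) = g (y ++ z) y s
  | [] => rfl
  | b :: s => by
    cases b <;> simp [T2 y z s]

/-- Key lemma: a nontrivial relation between `x` and `y` forces them to commute. -/
lemma key : ∀ N : ℕ, ∀ x y : List α, x.length + y.length ≤ N →
    ∀ s t : List Bool, g x y s = g x y t → s ≠ t → x ++ y = y ++ x := by
  intro N
  induction N with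
  | zero =>
    intro x y hN s t _ _
    have hx : x = [] := by
      cases x with
      | nil => rfl
      | cons a l => simp at hN
    simp [hx]
  | succ N IH =>
    intro x y hN
    -- dispatch the trivial cases where one word is empty
    rcases eq_or_ne x [] with hx | hx
    · intro s t _ _; simp [hx]
    rcases eq_or_ne y [] with hy | hy
    · intro s t _ _; simp [hy]
    -- helper for the head-mismatch case
    have H : ∀ s t : List Bool, x ++ g x y s = y ++ g x y t → x ++ y = y ++ x := by
      intro s t heq
      rcases le_total x.length y.length with hle | hle
      · -- x is a prefix of y
        have hpre : x <+: y :=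
          List.prefix_of_prefix_length_le ⟨g x y s, rfl⟩ ⟨g x y t, heq.symm⟩ hle
        obtain ⟨z, hz⟩ := hpre
        subst hz
        rcases eq_or_ne z [] with hzn | hzn
        · simp [hzn]
        · have heq2 : g x (x ++ z) s = z ++ g x (x ++ z) t := by
            rw [List.append_assoc] at heq
            exact List.append_cancel_left heq
          have heq3 : g z x (s.flatMap fun b => bif b then [true, false] else [true])
              = g z x (false :: (t.flatMap fun b => bif b then [true, false] else [true])) := by
            simp only [g_cons, cond_false]
            rw [T1, T1]
            exact heq2
          have hne3 : (s.flatMap fun b => bif b then [true, false] else [true])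
              ≠ (false :: (t.flatMap fun b => bif b then [true, false] else [true])) := by
            cases s with
            | nil =>
              exfalso
              have h0 : z ++ g x (x ++ z) t = [] := by simpa using heq2.symm
              exact hzn (List.append_eq_nil_iff.mp h0).1
            | cons b s' =>
              cases b <;> simp
          have hcomm : z ++ x = x ++ z := by
            refine IH z x ?_ _ _ heq3 hne3
            have hxlen : 1 ≤ x.length := List.length_pos_iff.mpr hx
            simp only [List.length_append] at hN
            omega
          conv_rhs => rw [List.append_assoc, hcomm]
      · -- y is a prefix of x
        have hpre : y <+: x :=
          List.prefix_of_prefix_length_le ⟨g x y t, heq.symm⟩ ⟨g x y s, rfl⟩ hle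
        obtain ⟨z, hz⟩ := hpre
        subst hz
        rcases eq_or_ne z [] with hzn | hzn
        · simp [hzn]
        · have heq2 : g (y ++ z) y t = z ++ g (y ++ z) y s := by
            rw [List.append_assoc] at heq
            exact (List.append_cancel_left heq).symm
          have heq3 : g z y (t.flatMap fun b => bif b then [true] else [true, false])
              = g z y (false :: (s.flatMap fun b => bif b then [true] else [true, false])) := by
            simp only [g_cons, cond_false]
            rw [T2, T2]
            exact heq2
          have hne3 : (t.flatMap fun b => bif b then [true] else [true, false])
              ≠ (false :: (s.flatMap fun b => bif b then [true] else [true, false])) := by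
            cases t with
            | nil =>
              exfalso
              have h0 : z ++ g (y ++ z) y s = [] := by simpa using heq2.symm
              exact hzn (List.append_eq_nil_iff.mp h0).1
            | cons b t' =>
              cases b <;> simp
          have hcomm : z ++ y = y ++ z := by
            refine IH z y ?_ _ _ heq3 hne3
            have hylen : 1 ≤ y.length := List.length_pos_iff.mpr hy
            simp only [List.length_append] at hN
            omega
          conv_lhs => rw [List.append_assoc, hcomm]
    -- now the main induction on s
    intro s
    induction s with
    | nil =>
      intro t heq hne
      cases t with
      | nil => exact absurd rfl hne
      | cons c t' =>
        exfalso
        have : (bif c then y else x) ++ g x y t' = [] := by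
          simpa using heq.symm
        cases c <;> simp_all
    | cons b s' IHs =>
      intro t heq hne
      cases t with
      | nil =>
        exfalso
        have : (bif b then y else x) ++ g x y s' = [] := by simpa using heq
        cases b <;> simp_all
      | cons c t' =>
        rcases eq_or_ne b c with hbc | hbc
        · subst hbc
          have heq' : g x y s' = g x y t' := by
            have := heq
            simp only [g_cons] at this
            exact List.append_cancel_left this
          exact IHs t' heq' (fun h' => hne (by rw [h']))
        · cases b <;> cases c
          · exact absurd rfl hbc
          · -- x ++ g s' = y ++ g t'
            apply H s' t'
            simpa using heq
          · -- y ++ g s' = x ++ g t', i.e. apply H with roles swapped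
            apply H t' s'
            simpa using heq.symm
          · exact absurd rfl hbc

end NoncommEnc

/-- If `v₀·v₁ ≠ v₁·v₀`, then the map sending a binary string `b₁b₂⋯bₘ` to the
word `v_{b₁}·v_{b₂}⋯v_{bₘ}` is injective. -/
theorem noncommuting_encoding_injective {α : Type*} (v₀ v₁ : List α)
    (h : v₀ ++ v₁ ≠ v₁ ++ v₀) :
    Function.Injective
      (fun s : List Bool => (s.map fun b => bif b then v₁ else v₀).flatten) := by
  intro s t heq
  by_contra hne
  exact h (NoncommEnc.key (v₀.length + v₁.length) v₀ v₁ le_rfl s t heq hne)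
end
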